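/- Let x be a sequence of length n and let k be the position of the minimum value of x (so that the root of the Cartesian tree of x is k, its left subtree is the Cartesian tree of A = x[1…k−1] and its right subtree is the Cartesian tree of B = x[k+1…n]). Then |NG(x)| = |NG(A)| + |NG(B)| + |NG(x,k−1)| + |NG(x,k)|, where NG(x,i) = ∅ for i ∉ {1,…,n−1} and NG of a sequence of length at most 1 is ∅. Equivalently, |Σ_{i=1}^{k−2} |NG(x,i)|| = |NG(A)| and Σ_{i=k+1}^{n−1} |NG(x,i)| = |NG(B)|. -/

import Mathlib

/-- A sequence of length `n`: a function `ℕ → ℤ` injective on positions `1,…,n`. -/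
def IsSeq (n : ℕ) (x : ℕ → ℤ) : Prop := Set.InjOn x (Set.Icc 1 n)

/-- Parent-distance table: `fwdPD x i = i - max{ j | 1 ≤ j < i, x j < x i }` if such `j`
exists, `0` otherwise. -/
def fwdPD (x : ℕ → ℤ) (i : ℕ) : ℕ :=
  if h : ((Finset.Ico 1 i).filter (fun j => x j < x i)).Nonempty then
    i - ((Finset.Ico 1 i).filter (fun j => x j < x i)).max' h
  else 0

/-- Reverse parent-distance table: `revPD n x i = min{ j | i < j ≤ n, x j < x i } - i` if
such `j` exists, `0` otherwise. -/
def revPD (n : ℕ) (x : ℕ → ℤ) (i : ℕ) : ℕ :=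
  if h : ((Finset.Ioc i n).filter (fun j => x j < x i)).Nonempty then
    ((Finset.Ioc i n).filter (fun j => x j < x i)).min' h - i
  else 0

/-- The swap `τ(x,i)`: exchanges positions `i` and `i+1`. -/
def swapSeq (x : ℕ → ℤ) (i : ℕ) : ℕ → ℤ :=
  fun j => if j = i then x (i + 1) else if j = i + 1 then x i else x j

/-- The parent-distance table of a sequence of length `n`, as a function on `Fin n`
(position `k : Fin n` corresponds to index `k+1 ∈ {1,…,n}`). -/
def PDvec (n : ℕ) (x : ℕ → ℤ) : Fin n → ℕ := fun k => fwdPD x (k.1 + 1)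

/-- `NGat n x i` is the set of parent-distance tables obtained by a swap at position `i`
(`1 ≤ i ≤ n-1`) from some sequence `z` having the same Cartesian tree (i.e. the same
parent-distance table) as `x`; it is empty for `i` out of range. -/
def NGat (n : ℕ) (x : ℕ → ℤ) (i : ℕ) : Set (Fin n → ℕ) :=
  {P | 1 ≤ i ∧ i + 1 ≤ n ∧
    ∃ z, IsSeq n z ∧ PDvec n z = PDvec n x ∧ P = PDvec n (swapSeq z i)}

/-- The neighborhood of (the Cartesian tree of) `x` in the swap graph. -/
def NG (n : ℕ) (x : ℕ → ℤ) : Set (Fin n → ℕ) := ⋃ i, NGat n x i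

section Basic

lemma fwdPD_eq_of_iff (w w' : ℕ → ℤ) (m : ℕ)
    (h : ∀ j, 1 ≤ j → j < m → (w j < w m ↔ w' j < w' m)) :
    fwdPD w m = fwdPD w' m := by
  unfold fwdPD
  have hf : (Finset.Ico 1 m).filter (fun j => w j < w m)
      = (Finset.Ico 1 m).filter (fun j => w' j < w' m) := by
    apply Finset.filter_congr
    intro j hj
    rw [Finset.mem_Ico] at hj
    simp [h j hj.1 hj.2]
  rw [hf]

lemma fwdPD_eq_of_eqOn (w w' : ℕ → ℤ) (m : ℕ)
    (h : ∀ j, j ≤ m → w j = w' j) :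
    fwdPD w m = fwdPD w' m := by
  apply fwdPD_eq_of_iff
  intro j _ hj
  rw [h j (le_of_lt hj), h m le_rfl]

lemma fwdPD_shift (w : ℕ → ℤ) (M : ℤ) (m : ℕ) :
    fwdPD (fun j => w j + M) m = fwdPD w m := by
  apply fwdPD_eq_of_iff
  intro j _ _
  simp

lemma fwdPD_eq_zero_iff (w : ℕ → ℤ) (m : ℕ) :
    fwdPD w m = 0 ↔ ∀ j, 1 ≤ j → j < m → ¬ w j < w m := by
  unfold fwdPD
  split_ifs with h
  · obtain ⟨a, ha⟩ := h
    have ham := Finset.le_max' _ a ha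
    rw [Finset.mem_filter, Finset.mem_Ico] at ha
    have hmax := ((Finset.Ico 1 m).filter (fun j => w j < w m)).max'_mem ⟨a, by
      rw [Finset.mem_filter, Finset.mem_Ico]; exact ha⟩
    rw [Finset.mem_filter, Finset.mem_Ico] at hmax
    constructor
    · intro h0
      omega
    · intro hall
      exact absurd hmax.2 (hall _ hmax.1.1 hmax.1.2)
  · simp only [Finset.not_nonempty_iff_eq_empty, Finset.filter_eq_empty_iff] at h
    constructor
    · intro _ j h1 h2 hlt
      exact h (by rw [Finset.mem_Ico]; exact ⟨h1, h2⟩) hlt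
    · intro _; rfl

lemma fwdPD_lt (w : ℕ → ℤ) (m : ℕ) (hm : 1 ≤ m) : fwdPD w m < m := by
  unfold fwdPD
  split_ifs with h
  · have hmax := ((Finset.Ico 1 m).filter (fun j => w j < w m)).max'_mem h
    rw [Finset.mem_filter, Finset.mem_Ico] at hmax
    omega
  · omega

lemma fwdPD_succ_eq_one_iff (w : ℕ → ℤ) (m : ℕ) (hm : 1 ≤ m) :
    fwdPD w (m+1) = 1 ↔ w m < w (m+1) := by
  unfold fwdPD
  constructor
  · intro h
    split_ifs at h with hne
    · have hmax := ((Finset.Ico 1 (m+1)).filter (fun j => w j < w (m+1))).max'_mem hne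
      rw [Finset.mem_filter, Finset.mem_Ico] at hmax
      have : ((Finset.Ico 1 (m+1)).filter (fun j => w j < w (m+1))).max' hne = m := by omega
      rw [this] at hmax
      exact hmax.2
  · intro h
    have hmem : m ∈ (Finset.Ico 1 (m+1)).filter (fun j => w j < w (m+1)) := by
      rw [Finset.mem_filter, Finset.mem_Ico]; exact ⟨⟨hm, by omega⟩, h⟩
    have hne : ((Finset.Ico 1 (m+1)).filter (fun j => w j < w (m+1))).Nonempty := ⟨m, hmem⟩
    rw [dif_pos hne]
    have h1 := Finset.le_max' _ m hmem
    have h2 := ((Finset.Ico 1 (m+1)).filter (fun j => w j < w (m+1))).max'_mem hne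
    rw [Finset.mem_filter, Finset.mem_Ico] at h2
    omega

lemma fwdPD_succ2_eq_two_iff (w : ℕ → ℤ) (i : ℕ) (hi : 1 ≤ i) :
    fwdPD w (i+2) = 2 ↔ (w i < w (i+2) ∧ ¬ w (i+1) < w (i+2)) := by
  unfold fwdPD
  constructor
  · intro h
    split_ifs at h with hne
    · have hmax := ((Finset.Ico 1 (i+2)).filter (fun j => w j < w (i+2))).max'_mem hne
      rw [Finset.mem_filter, Finset.mem_Ico] at hmax
      have heq : ((Finset.Ico 1 (i+2)).filter (fun j => w j < w (i+2))).max' hne = i := by omega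
      rw [heq] at hmax
      refine ⟨hmax.2, fun hc => ?_⟩
      have hmem1 : i + 1 ∈ (Finset.Ico 1 (i+2)).filter (fun j => w j < w (i+2)) := by
        rw [Finset.mem_filter, Finset.mem_Ico]; exact ⟨⟨by omega, by omega⟩, hc⟩
      have := Finset.le_max' _ (i+1) hmem1
      omega
  · rintro ⟨h1, h2⟩
    have hmem : i ∈ (Finset.Ico 1 (i+2)).filter (fun j => w j < w (i+2)) := by
      rw [Finset.mem_filter, Finset.mem_Ico]; exact ⟨⟨hi, by omega⟩, h1⟩
    have hne : ((Finset.Ico 1 (i+2)).filter (fun j => w j < w (i+2))).Nonempty := ⟨i, hmem⟩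
    rw [dif_pos hne]
    have hle := Finset.le_max' _ i hmem
    have hmax := ((Finset.Ico 1 (i+2)).filter (fun j => w j < w (i+2))).max'_mem hne
    rw [Finset.mem_filter, Finset.mem_Ico] at hmax
    have : ((Finset.Ico 1 (i+2)).filter (fun j => w j < w (i+2))).max' hne ≠ i + 1 := by
      intro hc; rw [hc] at hmax; exact h2 hmax.2
    omega

end Basic
section Suffix

/-- `w` and `w'` agree on `[k,m]` and both have their minimum (among `[1,m]`) at `k`. -/
lemma fwdPD_eq_of_eqOn_suffix (w w' : ℕ → ℤ) (k m : ℕ) (hk : 1 ≤ k) (hkm : k < m)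
    (hmin : ∀ j, 1 ≤ j → j ≤ m → j ≠ k → w k < w j)
    (hmin' : ∀ j, 1 ≤ j → j ≤ m → j ≠ k → w' k < w' j)
    (heq : ∀ j, k ≤ j → j ≤ m → w j = w' j) :
    fwdPD w m = fwdPD w' m := by
  have hkF : k ∈ (Finset.Ico 1 m).filter (fun j => w j < w m) := by
    rw [Finset.mem_filter, Finset.mem_Ico]
    exact ⟨⟨hk, hkm⟩, hmin m (by omega) le_rfl (by omega)⟩
  have hkF' : k ∈ (Finset.Ico 1 m).filter (fun j => w' j < w' m) := by
    rw [Finset.mem_filter, Finset.mem_Ico]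
    exact ⟨⟨hk, hkm⟩, hmin' m (by omega) le_rfl (by omega)⟩
  have hne : ((Finset.Ico 1 m).filter (fun j => w j < w m)).Nonempty := ⟨k, hkF⟩
  have hne' : ((Finset.Ico 1 m).filter (fun j => w' j < w' m)).Nonempty := ⟨k, hkF'⟩
  have key : ∀ a, a ∈ (Finset.Ico 1 m).filter (fun j => w j < w m) → k ≤ a →
      a ∈ (Finset.Ico 1 m).filter (fun j => w' j < w' m) := by
    intro a ha hka
    rw [Finset.mem_filter, Finset.mem_Ico] at ha ⊢
    refine ⟨ha.1, ?_⟩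
    rw [← heq a hka (by omega), ← heq m (by omega) le_rfl]
    exact ha.2
  have key' : ∀ a, a ∈ (Finset.Ico 1 m).filter (fun j => w' j < w' m) → k ≤ a →
      a ∈ (Finset.Ico 1 m).filter (fun j => w j < w m) := by
    intro a ha hka
    rw [Finset.mem_filter, Finset.mem_Ico] at ha ⊢
    refine ⟨ha.1, ?_⟩
    rw [heq a hka (by omega), heq m (by omega) le_rfl]
    exact ha.2
  have hmaxeq : ((Finset.Ico 1 m).filter (fun j => w j < w m)).max' hne
      = ((Finset.Ico 1 m).filter (fun j => w' j < w' m)).max' hne' := by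
    apply le_antisymm
    · exact Finset.le_max' _ _ (key _ (Finset.max'_mem _ hne) (Finset.le_max' _ _ hkF))
    · exact Finset.le_max' _ _ (key' _ (Finset.max'_mem _ hne') (Finset.le_max' _ _ hkF'))
  unfold fwdPD
  rw [dif_pos hne, dif_pos hne', hmaxeq]

/-- PD at a position `m > k` in terms of the suffix sequence, when the minimum over
`[1,m]` is at `k`. -/
lemma fwdPD_suffix (w : ℕ → ℤ) (k m : ℕ) (hk : 1 ≤ k) (hkm : k < m)
    (hmin : ∀ j, 1 ≤ j → j ≤ m → j ≠ k → w k < w j) :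
    fwdPD w m = if fwdPD (fun q => w (q + k)) (m - k) = 0 then m - k
                else fwdPD (fun q => w (q + k)) (m - k) := by
  have hwm : w ((m - k) + k) = w m := by congr 1; omega
  have hkF : k ∈ (Finset.Ico 1 m).filter (fun j => w j < w m) := by
    rw [Finset.mem_filter, Finset.mem_Ico]
    exact ⟨⟨hk, hkm⟩, hmin m (by omega) le_rfl (by omega)⟩
  have hne : ((Finset.Ico 1 m).filter (fun j => w j < w m)).Nonempty := ⟨k, hkF⟩
  set F' := (Finset.Ico 1 (m - k)).filter (fun q => w (q + k) < w ((m - k) + k)) with hF'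
  by_cases hne' : F'.Nonempty
  · -- max of F is max' F' + k
    obtain ⟨b, hb⟩ := hne'
    have hmaxmem := F'.max'_mem ⟨b, hb⟩
    set b0 := F'.max' ⟨b, hb⟩ with hb0
    rw [hF', Finset.mem_filter, Finset.mem_Ico] at hmaxmem
    have hb0F : b0 + k ∈ (Finset.Ico 1 m).filter (fun j => w j < w m) := by
      rw [Finset.mem_filter, Finset.mem_Ico]
      rw [hwm] at hmaxmem
      exact ⟨⟨by omega, by omega⟩, hmaxmem.2⟩
    have hmaxF := ((Finset.Ico 1 m).filter (fun j => w j < w m)).max'_mem hne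
    set a := ((Finset.Ico 1 m).filter (fun j => w j < w m)).max' hne with ha
    rw [Finset.mem_filter, Finset.mem_Ico] at hmaxF
    have hak : b0 + k ≤ a := Finset.le_max' _ _ hb0F
    have haF' : a - k ∈ F' := by
      rw [hF', Finset.mem_filter, Finset.mem_Ico, hwm]
      constructor
      · omega
      · have : a - k + k = a := by omega
        rw [this]; exact hmaxF.2
    have hab : a - k ≤ b0 := Finset.le_max' _ _ haF'
    have haval : a = b0 + k := by omega
    have hpd' : fwdPD (fun q => w (q + k)) (m - k) = (m - k) - b0 := by
      unfold fwdPD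
      rw [dif_pos ⟨b, hb⟩]
    have hpdz : fwdPD w m = m - a := by
      unfold fwdPD
      rw [dif_pos hne]
    rw [hpd', hpdz]
    have hb0lt : b0 < m - k := hmaxmem.1.2
    have : ¬ (m - k - b0 = 0) := by omega
    rw [if_neg this]
    omega
  · -- F ∩ (k, m) empty, so max' F = k
    have hmaxF := ((Finset.Ico 1 m).filter (fun j => w j < w m)).max'_mem hne
    set a := ((Finset.Ico 1 m).filter (fun j => w j < w m)).max' hne with ha
    rw [Finset.mem_filter, Finset.mem_Ico] at hmaxF
    have hak : k ≤ a := Finset.le_max' _ _ hkF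
    have : a = k := by
      by_contra hc
      apply hne'
      refine ⟨a - k, ?_⟩
      rw [hF', Finset.mem_filter, Finset.mem_Ico, hwm]
      have : a - k + k = a := by omega
      rw [this]
      exact ⟨⟨by omega, by omega⟩, hmaxF.2⟩
    have hpd0 : fwdPD (fun q => w (q + k)) (m - k) = 0 := by
      unfold fwdPD
      rw [dif_neg]
      exact hne'
    rw [hpd0, if_pos rfl]
    unfold fwdPD
    rw [dif_pos hne, ← ha, this]

end Suffix
section Swap

def MinAt (n : ℕ) (w : ℕ → ℤ) (k : ℕ) : Prop := ∀ j, 1 ≤ j → j ≤ n → j ≠ k → w k < w j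

lemma swapSeq_eq_of_lt (w : ℕ → ℤ) (i j : ℕ) (h : j < i) : swapSeq w i j = w j := by
  unfold swapSeq
  rw [if_neg (by omega), if_neg (by omega)]

lemma swapSeq_eq_of_gt (w : ℕ → ℤ) (i j : ℕ) (h : i + 1 < j) : swapSeq w i j = w j := by
  unfold swapSeq
  rw [if_neg (by omega), if_neg (by omega)]

lemma swapSeq_left (w : ℕ → ℤ) (i : ℕ) : swapSeq w i i = w (i + 1) := by
  unfold swapSeq; rw [if_pos rfl]

lemma swapSeq_right (w : ℕ → ℤ) (i : ℕ) : swapSeq w i (i+1) = w i := by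
  unfold swapSeq; rw [if_neg (by omega), if_pos rfl]

def swapIdx (i j : ℕ) : ℕ := if j = i then i + 1 else if j = i + 1 then i else j

lemma swapSeq_eq_swapIdx (w : ℕ → ℤ) (i j : ℕ) : swapSeq w i j = w (swapIdx i j) := by
  unfold swapSeq swapIdx
  split_ifs <;> rfl

lemma swapIdx_mem (i j a b : ℕ) (h1 : a ≤ i) (h2 : i + 1 ≤ b) (h3 : a ≤ j) (h4 : j ≤ b) :
    a ≤ swapIdx i j ∧ swapIdx i j ≤ b := by
  unfold swapIdx; split_ifs <;> omega

lemma swapIdx_ne (i j k : ℕ) (h1 : i ≠ k) (h2 : i + 1 ≠ k) (h3 : j ≠ k) : swapIdx i j ≠ k := by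
  unfold swapIdx; split_ifs <;> omega

lemma swapIdx_self (i k : ℕ) (h1 : i ≠ k) (h2 : i + 1 ≠ k) : swapIdx i k = k := by
  unfold swapIdx; rw [if_neg (by omega), if_neg (by omega)]

lemma IsSeq_swapSeq (n : ℕ) (w : ℕ → ℤ) (i : ℕ) (hw : IsSeq n w) (h1 : 1 ≤ i)
    (h2 : i + 1 ≤ n) : IsSeq n (swapSeq w i) := by
  intro a ha b hb heq
  simp only [Set.mem_Icc] at ha hb
  rw [swapSeq_eq_swapIdx, swapSeq_eq_swapIdx] at heq
  have hma := swapIdx_mem i a 1 n h1 h2 ha.1 ha.2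
  have hmb := swapIdx_mem i b 1 n h1 h2 hb.1 hb.2
  have := hw (Set.mem_Icc.mpr hma) (Set.mem_Icc.mpr hmb) heq
  unfold swapIdx at this
  split_ifs at this <;> omega

lemma MinAt_swapSeq (n : ℕ) (w : ℕ → ℤ) (i k : ℕ) (hmin : MinAt n w k)
    (h1 : 1 ≤ i) (h2 : i + 1 ≤ n) (hik : i ≠ k) (hik' : i + 1 ≠ k) :
    MinAt n (swapSeq w i) k := by
  intro j hj1 hj2 hjk
  rw [swapSeq_eq_swapIdx, swapSeq_eq_swapIdx, swapIdx_self i k hik hik']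
  have hm := swapIdx_mem i j 1 n h1 h2 hj1 hj2
  exact hmin _ hm.1 hm.2 (swapIdx_ne i j k hik hik' hjk)

lemma PDvec_eq_iff (n : ℕ) (z x : ℕ → ℤ) :
    PDvec n z = PDvec n x ↔ ∀ p, 1 ≤ p → p ≤ n → fwdPD z p = fwdPD x p := by
  constructor
  · intro h p hp1 hp2
    have := congrFun h ⟨p - 1, by omega⟩
    simpa only [PDvec, Nat.sub_add_cancel hp1] using this
  · intro h
    funext t
    exact h (t.1 + 1) (by omega) (by omega)

/-- A sequence with the same PD table as `x` also has its minimum at `k`. -/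
lemma MinAt_of_PDvec_eq (n k : ℕ) (x z : ℕ → ℤ) (hz : IsSeq n z)
    (hk1 : 1 ≤ k) (hk2 : k ≤ n) (hmin : MinAt n x k)
    (hpd : PDvec n z = PDvec n x) : MinAt n z k := by
  rw [PDvec_eq_iff] at hpd
  have hxk : fwdPD x k = 0 := by
    rw [fwdPD_eq_zero_iff]
    intro j hj1 hj2 hlt
    exact absurd hlt (not_lt.mpr (le_of_lt (hmin j hj1 (by omega) (by omega))))
  obtain ⟨m, hm_mem, hm_min⟩ := Finset.exists_min_image (Finset.Icc 1 n) z
    ⟨k, Finset.mem_Icc.mpr ⟨hk1, hk2⟩⟩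
  rw [Finset.mem_Icc] at hm_mem
  have hzm0 : fwdPD z m = 0 := by
    rw [fwdPD_eq_zero_iff]
    intro j hj1 hj2 hlt
    have := hm_min j (Finset.mem_Icc.mpr ⟨hj1, by omega⟩)
    omega
  have hmk : m = k := by
    by_contra hc
    rcases lt_or_gt_of_ne hc with hlt | hgt
    · -- m < k : contradicts fwdPD z k = 0
      have hzk : fwdPD z k = 0 := by rw [hpd k hk1 hk2]; exact hxk
      rw [fwdPD_eq_zero_iff] at hzk
      have hne : z m ≠ z k := fun he => hc (hz (Set.mem_Icc.mpr ⟨hm_mem.1, hm_mem.2⟩)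
        (Set.mem_Icc.mpr ⟨hk1, hk2⟩) he)
      have := hm_min k (Finset.mem_Icc.mpr ⟨hk1, hk2⟩)
      exact hzk m hm_mem.1 hlt (lt_of_le_of_ne this hne)
    · -- m > k : fwdPD x m ≠ 0
      have hxm : fwdPD x m ≠ 0 := by
        rw [Ne, fwdPD_eq_zero_iff]
        push_neg
        exact ⟨k, hk1, hgt, hmin m (by omega) hm_mem.2 (by omega)⟩
      rw [← hpd m (by omega) hm_mem.2] at hxm
      exact hxm hzm0
  subst hmk
  intro j hj1 hj2 hjk
  have hle := hm_min j (Finset.mem_Icc.mpr ⟨hj1, hj2⟩)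
  have hne : z m ≠ z j := fun he => hjk (hz (Set.mem_Icc.mpr ⟨hm_mem.1, hm_mem.2⟩)
    (Set.mem_Icc.mpr ⟨hj1, hj2⟩) he).symm
  exact lt_of_le_of_ne hle hne

lemma fwdPD_eq_zero_of_min (w : ℕ → ℤ) (k : ℕ) (hmin : ∀ j, 1 ≤ j → j < k → w k < w j) :
    fwdPD w k = 0 := by
  rw [fwdPD_eq_zero_iff]
  intro j hj1 hj2 hlt
  exact absurd hlt (not_lt.mpr (le_of_lt (hmin j hj1 hj2)))

end Swap
section Disjoint

lemma NGat_disjoint_lt (n : ℕ) (x : ℕ → ℤ) {i j : ℕ} (hij : i < j) (P : Fin n → ℕ)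
    (hPi : P ∈ NGat n x i) (hPj : P ∈ NGat n x j) : False := by
  obtain ⟨hi1, hi2, z, hz, hzx, hPz⟩ := hPi
  obtain ⟨hj1, hj2, u, hu, hux, hPu⟩ := hPj
  have hq : ∀ p, 1 ≤ p → p ≤ n → fwdPD z p = fwdPD u p := by
    intro p h1 h2
    rw [(PDvec_eq_iff n z x).1 hzx p h1 h2, (PDvec_eq_iff n u x).1 hux p h1 h2]
  have hP : ∀ p, 1 ≤ p → p ≤ n → fwdPD (swapSeq z i) p = fwdPD (swapSeq u j) p := by
    intro p h1 h2
    exact (PDvec_eq_iff n _ _).1 (hPz ▸ hPu) p h1 h2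
  have hnez : z i ≠ z (i+1) := fun he => by
    have := hz (Set.mem_Icc.mpr ⟨by omega, by omega⟩) (Set.mem_Icc.mpr ⟨by omega, by omega⟩) he
    omega
  have e1 : fwdPD z (i+1) = 1 ↔ z i < z (i+1) := fwdPD_succ_eq_one_iff z i hi1
  have f1 : fwdPD (swapSeq z i) (i+1) = 1 ↔ z (i+1) < z i := by
    have h := fwdPD_succ_eq_one_iff (swapSeq z i) i hi1
    rwa [swapSeq_left, swapSeq_right] at h
  rcases Nat.lt_or_ge (i+1) j with hcase | hcase
  · -- j ≥ i + 2 : P agrees with the original PD at position i+1, but the swap at i flips it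
    have loc : fwdPD (swapSeq u j) (i+1) = fwdPD u (i+1) :=
      fwdPD_eq_of_eqOn _ _ _ (fun l hl => swapSeq_eq_of_lt u j l (by omega))
    have hchain : fwdPD (swapSeq z i) (i+1) = fwdPD z (i+1) := by
      rw [hP (i+1) (by omega) (by omega), loc, ← hq (i+1) (by omega) (by omega)]
    rcases lt_or_gt_of_ne hnez with h | h
    · have h1 := e1.2 h
      have h2 := f1.1 (by omega)
      exact absurd h2 (not_lt.mpr (le_of_lt h))
    · have h2 := f1.2 h
      have h1 := e1.1 (by omega)
      exact absurd h1 (not_lt.mpr (le_of_lt h))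
  · -- j = i + 1
    have hj : j = i + 1 := by omega
    subst hj
    have hi2n : i + 2 ≤ n := by omega
    have hnez2 : z (i+1) ≠ z (i+2) := fun he => by
      have := hz (Set.mem_Icc.mpr ⟨by omega, by omega⟩) (Set.mem_Icc.mpr ⟨by omega, by omega⟩) he
      omega
    have hnez3 : z i ≠ z (i+2) := fun he => by
      have := hz (Set.mem_Icc.mpr ⟨by omega, by omega⟩) (Set.mem_Icc.mpr ⟨by omega, by omega⟩) he
      omega
    have hneu : u i ≠ u (i+1) := fun he => by
      have := hu (Set.mem_Icc.mpr ⟨by omega, by omega⟩) (Set.mem_Icc.mpr ⟨by omega, by omega⟩) he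
      omega
    have hneu2 : u (i+1) ≠ u (i+2) := fun he => by
      have := hu (Set.mem_Icc.mpr ⟨by omega, by omega⟩) (Set.mem_Icc.mpr ⟨by omega, by omega⟩) he
      omega
    have hneu3 : u i ≠ u (i+2) := fun he => by
      have := hu (Set.mem_Icc.mpr ⟨by omega, by omega⟩) (Set.mem_Icc.mpr ⟨by omega, by omega⟩) he
      omega
    have h12 : i + 1 + 1 = i + 2 := by omega
    have e1u : fwdPD u (i+1) = 1 ↔ u i < u (i+1) := fwdPD_succ_eq_one_iff u i hi1
    have e3 : fwdPD z (i+2) = 1 ↔ z (i+1) < z (i+2) := by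
      have h := fwdPD_succ_eq_one_iff z (i+1) (by omega)
      rwa [h12] at h
    have e3u : fwdPD u (i+2) = 1 ↔ u (i+1) < u (i+2) := by
      have h := fwdPD_succ_eq_one_iff u (i+1) (by omega)
      rwa [h12] at h
    have e2 : fwdPD z (i+2) = 2 ↔ (z i < z (i+2) ∧ ¬ z (i+1) < z (i+2)) :=
      fwdPD_succ2_eq_two_iff z i hi1
    have e2u : fwdPD u (i+2) = 2 ↔ (u i < u (i+2) ∧ ¬ u (i+1) < u (i+2)) :=
      fwdPD_succ2_eq_two_iff u i hi1
    have f1u : fwdPD (swapSeq u (i+1)) (i+1) = 1 ↔ u i < u (i+2) := by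
      have h := fwdPD_succ_eq_one_iff (swapSeq u (i+1)) i hi1
      rwa [swapSeq_eq_of_lt u (i+1) i (by omega), swapSeq_left, h12] at h
    have f3 : fwdPD (swapSeq z i) (i+2) = 1 ↔ z i < z (i+2) := by
      have h := fwdPD_succ_eq_one_iff (swapSeq z i) (i+1) (by omega)
      rwa [h12, swapSeq_right, swapSeq_eq_of_gt z i (i+2) (by omega)] at h
    have f3u : fwdPD (swapSeq u (i+1)) (i+2) = 1 ↔ u (i+2) < u (i+1) := by
      have h := fwdPD_succ_eq_one_iff (swapSeq u (i+1)) (i+1) (by omega)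
      rwa [h12, swapSeq_left, h12, swapSeq_right] at h
    have f2 : fwdPD (swapSeq z i) (i+2) = 2 ↔
        (z (i+1) < z (i+2) ∧ ¬ z i < z (i+2)) := by
      have h := fwdPD_succ2_eq_two_iff (swapSeq z i) i hi1
      rwa [swapSeq_left, swapSeq_right, swapSeq_eq_of_gt z i (i+2) (by omega)] at h
    have f2u : fwdPD (swapSeq u (i+1)) (i+2) = 2 ↔
        (u i < u (i+1) ∧ ¬ u (i+2) < u (i+1)) := by
      have hs1 : swapSeq u (i+1) (i+1) = u (i+2) := by rw [swapSeq_left, h12]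
      have hs2 : swapSeq u (i+1) (i+2) = u (i+1) := by
        have h := swapSeq_right u (i+1); rwa [h12] at h
      have h := fwdPD_succ2_eq_two_iff (swapSeq u (i+1)) i hi1
      rwa [swapSeq_eq_of_lt u (i+1) i (by omega), hs1, hs2] at h
    have hq1 := hq (i+1) (by omega) (by omega)
    have hq2 := hq (i+2) (by omega) (by omega)
    have hp1 := hP (i+1) (by omega) (by omega)
    have hp2 := hP (i+2) (by omega) (by omega)
    omega

end Disjoint
section Card

lemma NGat_disjoint' (n : ℕ) (x : ℕ → ℤ) {i j : ℕ} (hij : i ≠ j) :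
    NGat n x i ∩ NGat n x j = ∅ := by
  ext P
  simp only [Set.mem_inter_iff, Set.mem_empty_iff_false, iff_false, not_and]
  intro h1 h2
  rcases lt_or_gt_of_ne hij with h | h
  · exact NGat_disjoint_lt n x h P h1 h2
  · exact NGat_disjoint_lt n x h P h2 h1

lemma PDvec_le (m : ℕ) (w : ℕ → ℤ) (t : Fin m) : PDvec m w t ≤ t.1 := by
  have := fwdPD_lt w (t.1+1) (by omega)
  simp only [PDvec]
  omega

lemma V_finite (m : ℕ) : ({P : Fin m → ℕ | ∀ t, P t ≤ t.1}).Finite := by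
  have hs : {P : Fin m → ℕ | ∀ t, P t ≤ t.1} ⊆ Set.pi Set.univ (fun t => Set.Iic t.1) := by
    intro P hP t _
    exact hP t
  exact (Set.Finite.pi (fun t => Set.finite_Iic _)).subset hs

lemma NGat_subset_V (m : ℕ) (y : ℕ → ℤ) (i : ℕ) :
    NGat m y i ⊆ {P : Fin m → ℕ | ∀ t, P t ≤ t.1} := by
  rintro P ⟨_, _, z, _, _, rfl⟩ t
  exact PDvec_le m _ t

lemma NGat_finite (m : ℕ) (y : ℕ → ℤ) (i : ℕ) : (NGat m y i).Finite :=
  (V_finite m).subset (NGat_subset_V m y i)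

lemma NG_finite (m : ℕ) (y : ℕ → ℤ) : (NG m y).Finite := by
  apply (V_finite m).subset
  intro P hP
  rw [NG, Set.mem_iUnion] at hP
  obtain ⟨i, hi⟩ := hP
  exact NGat_subset_V m y i hi

lemma ncard_biUnion_eq_sum {α : Type*} (s : Finset ℕ) (f : ℕ → Set α)
    (hfin : ∀ i, (f i).Finite)
    (hdisj : ∀ i j, i ≠ j → f i ∩ f j = ∅) :
    (⋃ i ∈ s, f i).ncard = ∑ i ∈ s, (f i).ncard := by
  classical
  induction s using Finset.induction_on with
  | empty => simp
  | @insert a s ha ih =>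
    have hfs : (⋃ i ∈ s, f i).Finite := by
      apply Set.Finite.biUnion (Finset.finite_toSet s)
      intro i _
      exact hfin i
    have hdis : Disjoint (f a) (⋃ i ∈ s, f i) := by
      rw [Set.disjoint_left]
      intro P hPa hPs
      simp only [Set.mem_iUnion] at hPs
      obtain ⟨i, his, hPi⟩ := hPs
      have he : f a ∩ f i = ∅ := hdisj a i (fun he => ha (he ▸ his))
      exact Set.eq_empty_iff_forall_notMem.mp he P ⟨hPa, hPi⟩
    rw [Finset.set_biUnion_insert, Finset.sum_insert ha, ← ih,
      Set.ncard_union_eq hdis (hfin a) hfs]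

lemma NG_eq_biUnion (m : ℕ) (y : ℕ → ℤ) :
    NG m y = ⋃ i ∈ Finset.Icc 1 (m-1), NGat m y i := by
  ext P
  simp only [NG, Set.mem_iUnion, Finset.mem_Icc]
  constructor
  · rintro ⟨i, hP⟩
    exact ⟨i, ⟨hP.1, by have := hP.2.1; omega⟩, hP⟩
  · rintro ⟨i, _, hP⟩
    exact ⟨i, hP⟩

lemma NG_ncard_sum (m : ℕ) (y : ℕ → ℤ) :
    (NG m y).ncard = ∑ i ∈ Finset.Icc 1 (m-1), (NGat m y i).ncard := by
  rw [NG_eq_biUnion]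
  exact ncard_biUnion_eq_sum _ _ (NGat_finite m y) (fun i j h => NGat_disjoint' m y h)

lemma NGat_out_empty (m : ℕ) (y : ℕ → ℤ) (i : ℕ) (h : ¬(1 ≤ i ∧ i + 1 ≤ m)) :
    NGat m y i = ∅ := by
  ext P
  simp only [NGat, Set.mem_setOf_eq, Set.mem_empty_iff_false, iff_false]
  rintro ⟨h1, h2, _⟩
  exact h ⟨h1, h2⟩

end Card
section Left

lemma fwdPD_eq_of_shift_eqOn (z z' : ℕ → ℤ) (M : ℤ) (t p : ℕ) (hp : p ≤ t)
    (hagree : ∀ j, 1 ≤ j → j ≤ t → z j = z' j + M) :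
    fwdPD z p = fwdPD z' p := by
  apply fwdPD_eq_of_iff
  intro j hj1 hj2
  have hp1 : 1 ≤ p := by omega
  rw [hagree j hj1 (by omega), hagree p hp1 hp]
  constructor <;> intro h <;> linarith

def PhiL (n k : ℕ) (x : ℕ → ℤ) (P : Fin (k-1) → ℕ) : Fin n → ℕ :=
  fun m => if h : m.1 < k - 1 then P ⟨m.1, h⟩ else fwdPD x (m.1 + 1)

lemma PhiL_injective (n k : ℕ) (x : ℕ → ℤ) (hkn : k - 1 ≤ n) :
    Function.Injective (PhiL n k x) := by
  intro P Q h
  funext t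
  have ht : t.1 < n := by omega
  have h2 := congrFun h ⟨t.1, ht⟩
  simp only [PhiL] at h2
  rw [dif_pos t.2, dif_pos t.2] at h2
  simpa using h2

lemma L_img (n k : ℕ) (x : ℕ → ℤ) (hx : IsSeq n x) (hk1 : 1 ≤ k) (hk2 : k ≤ n)
    (hmin : MinAt n x k) (i : ℕ) (hi1 : 1 ≤ i) (hi2 : i + 1 ≤ k - 1) :
    NGat n x i = PhiL n k x '' NGat (k-1) x i := by
  have hk3 : 3 ≤ k := by omega
  ext P
  constructor
  · rintro ⟨_, _, z, hz, hzx, rfl⟩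
    have hminz : MinAt n z k := MinAt_of_PDvec_eq n k x z hz hk1 hk2 hmin hzx
    have hminsz : MinAt n (swapSeq z i) k :=
      MinAt_swapSeq n z i k hminz hi1 (by omega) (by omega) (by omega)
    have hpdz := (PDvec_eq_iff n z x).1 hzx
    refine ⟨PDvec (k-1) (swapSeq z i), ⟨hi1, hi2, z, hz.mono ?_, ?_, rfl⟩, ?_⟩
    · intro a ha
      simp only [Set.mem_Icc] at *
      omega
    · rw [PDvec_eq_iff]
      intro p hp1 hp2
      exact hpdz p hp1 (by omega)
    · funext m
      by_cases hm : m.1 < k - 1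
      · simp only [PhiL, PDvec, dif_pos hm]
      · simp only [PhiL, PDvec, dif_neg hm]
        have hpk : k ≤ m.1 + 1 := by omega
        rcases eq_or_lt_of_le hpk with he | hlt
        · rw [← he,
            fwdPD_eq_zero_of_min x k (fun j a b => hmin j a (by omega) (by omega)),
            fwdPD_eq_zero_of_min (swapSeq z i) k (fun j a b => hminsz j a (by omega) (by omega))]
        · have h1 : fwdPD (swapSeq z i) (m.1+1) = fwdPD z (m.1+1) :=
            fwdPD_eq_of_eqOn_suffix (swapSeq z i) z k (m.1+1) hk1 hlt
              (fun j a b c => hminsz j a (by omega) c)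
              (fun j a b c => hminz j a (by omega) c)
              (fun j hj1 _ => swapSeq_eq_of_gt z i j (by omega))
          rw [h1, hpdz (m.1+1) (by omega) (by omega)]
  · rintro ⟨Q, ⟨_, _, z', hz', hz'x, rfl⟩, rfl⟩
    have hpdz' := (PDvec_eq_iff (k-1) z' x).1 hz'x
    have hne1 : ((Finset.Icc 1 n).image x).Nonempty :=
      ⟨x 1, Finset.mem_image.mpr ⟨1, Finset.mem_Icc.mpr ⟨le_rfl, by omega⟩, rfl⟩⟩
    have hne2 : ((Finset.Icc 1 (k-1)).image z').Nonempty :=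
      ⟨z' 1, Finset.mem_image.mpr ⟨1, Finset.mem_Icc.mpr ⟨le_rfl, by omega⟩, rfl⟩⟩
    set A := ((Finset.Icc 1 n).image x).max' hne1 with hA
    set B := ((Finset.Icc 1 (k-1)).image z').min' hne2 with hB
    set M := A + 1 - B with hM
    set z : ℕ → ℤ := fun j => if j ≤ k - 1 then z' j + M else x j with hzdef
    have ha : ∀ j, 1 ≤ j → j ≤ k-1 → ∀ p, 1 ≤ p → p ≤ n → x p < z' j + M := by
      intro j hj1 hj2 p hp1 hp2
      have h1 : x p ≤ A := Finset.le_max' _ _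
        (Finset.mem_image.mpr ⟨p, Finset.mem_Icc.mpr ⟨hp1, hp2⟩, rfl⟩)
      have h2 : B ≤ z' j := Finset.min'_le _ _
        (Finset.mem_image.mpr ⟨j, Finset.mem_Icc.mpr ⟨hj1, hj2⟩, rfl⟩)
      omega
    have hzpre : ∀ j, j ≤ k - 1 → z j = z' j + M := by
      intro j hj
      simp only [hzdef, if_pos hj]
    have hzsuf : ∀ j, k ≤ j → z j = x j := by
      intro j hj
      simp only [hzdef, if_neg (by omega : ¬ j ≤ k - 1)]
    have hminz : MinAt n z k := by
      intro j hj1 hj2 hjk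
      rw [hzsuf k le_rfl]
      by_cases hjp : j ≤ k - 1
      · rw [hzpre j hjp]
        exact ha j hj1 hjp k hk1 hk2
      · rw [hzsuf j (by omega)]
        exact hmin j hj1 hj2 hjk
    have hzinj : IsSeq n z := by
      intro a ha' b hb' heq
      simp only [Set.mem_Icc] at ha' hb'
      by_cases hap : a ≤ k - 1 <;> by_cases hbp : b ≤ k - 1
      · rw [hzpre a hap, hzpre b hbp] at heq
        have : z' a = z' b := by omega
        exact hz' (Set.mem_Icc.mpr ⟨ha'.1, hap⟩) (Set.mem_Icc.mpr ⟨hb'.1, hbp⟩) this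
      · rw [hzpre a hap, hzsuf b (by omega)] at heq
        exact absurd heq.symm (ne_of_lt (ha a ha'.1 hap b (by omega) hb'.2))
      · rw [hzsuf a (by omega), hzpre b hbp] at heq
        exact absurd heq (ne_of_lt (ha b hb'.1 hbp a (by omega) ha'.2))
      · rw [hzsuf a (by omega), hzsuf b (by omega)] at heq
        exact hx (Set.mem_Icc.mpr ⟨by omega, ha'.2⟩) (Set.mem_Icc.mpr ⟨by omega, hb'.2⟩) heq
    have hzx : PDvec n z = PDvec n x := by
      rw [PDvec_eq_iff]
      intro p hp1 hp2
      by_cases hpp : p ≤ k - 1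
      · rw [fwdPD_eq_of_shift_eqOn z z' M (k-1) p hpp (fun j _ hj => hzpre j hj)]
        exact hpdz' p hp1 hpp
      · rcases eq_or_lt_of_le (by omega : k ≤ p) with he | hlt
        · rw [← he,
            fwdPD_eq_zero_of_min z k (fun j a b => hminz j a (by omega) (by omega)),
            fwdPD_eq_zero_of_min x k (fun j a b => hmin j a (by omega) (by omega))]
        · exact fwdPD_eq_of_eqOn_suffix z x k p hk1 hlt
            (fun j a b c => hminz j a (by omega) c)
            (fun j a b c => hmin j a (by omega) c)
            (fun j hj1 _ => hzsuf j hj1)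
    refine ⟨hi1, by omega, z, hzinj, hzx, ?_⟩
    have hminsz : MinAt n (swapSeq z i) k :=
      MinAt_swapSeq n z i k hminz hi1 (by omega) (by omega) (by omega)
    have hswpre : ∀ j, 1 ≤ j → j ≤ k - 1 → swapSeq z i j = swapSeq z' i j + M := by
      intro j hj1 hj2
      rw [swapSeq_eq_swapIdx, swapSeq_eq_swapIdx]
      have hm := swapIdx_mem i j 1 (k-1) hi1 hi2 hj1 hj2
      exact hzpre _ hm.2
    funext m
    by_cases hm : m.1 < k - 1
    · simp only [PhiL, PDvec, dif_pos hm]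
      exact (fwdPD_eq_of_shift_eqOn (swapSeq z i) (swapSeq z' i) M (k-1) (m.1+1)
        (by omega) hswpre).symm
    · simp only [PhiL, PDvec, dif_neg hm]
      have hpk : k ≤ m.1 + 1 := by omega
      rcases eq_or_lt_of_le hpk with he | hlt
      · rw [← he,
          fwdPD_eq_zero_of_min x k (fun j a b => hmin j a (by omega) (by omega)),
          fwdPD_eq_zero_of_min (swapSeq z i) k (fun j a b => hminsz j a (by omega) (by omega))]
      · have h1 : fwdPD (swapSeq z i) (m.1+1) = fwdPD x (m.1+1) :=
          fwdPD_eq_of_eqOn_suffix (swapSeq z i) x k (m.1+1) hk1 hlt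
            (fun j a b c => hminsz j a (by omega) c)
            (fun j a b c => hmin j a (by omega) c)
            (fun j hj1 _ => by rw [swapSeq_eq_of_gt z i j (by omega)]; exact hzsuf j hj1)
        rw [h1]

end Left
section Right

lemma swapIdx_add (i q k : ℕ) : swapIdx (i+k) (q+k) = swapIdx i q + k := by
  unfold swapIdx
  split_ifs <;> omega

def PhiR (n k : ℕ) (x : ℕ → ℤ) (P : Fin (n-k) → ℕ) : Fin n → ℕ :=
  fun m => if h : k ≤ m.1 then
      (if P ⟨m.1 - k, by have := m.2; omega⟩ = 0 then m.1 + 1 - k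
       else P ⟨m.1 - k, by have := m.2; omega⟩)
    else fwdPD x (m.1 + 1)

lemma PhiR_injOn (n k : ℕ) (x : ℕ → ℤ) :
    Set.InjOn (PhiR n k x) {P : Fin (n-k) → ℕ | ∀ t, P t ≤ t.1} := by
  intro P hP Q hQ h
  funext t
  have ht : t.1 + k < n := by have := t.2; omega
  have h2 := congrFun h ⟨t.1 + k, ht⟩
  simp only [PhiR, dif_pos (by omega : k ≤ t.1 + k), Nat.add_sub_cancel, Fin.eta] at h2
  have h3 := hP t
  have h4 := hQ t
  rw [show t.1 + k + 1 - k = t.1 + 1 by omega] at h2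
  split_ifs at h2 <;> omega

lemma R_img (n k : ℕ) (x : ℕ → ℤ) (hx : IsSeq n x) (hk1 : 1 ≤ k) (hk2 : k ≤ n)
    (hmin : MinAt n x k) (i : ℕ) (hi1 : 1 ≤ i) (hi2 : i + 1 ≤ n - k) :
    NGat n x (i + k) = PhiR n k x '' NGat (n-k) (fun j => x (j + k)) i := by
  have hkn2 : k + 2 ≤ n := by omega
  ext P
  constructor
  · rintro ⟨_, _, z, hz, hzx, rfl⟩
    have hminz : MinAt n z k := MinAt_of_PDvec_eq n k x z hz hk1 hk2 hmin hzx
    have hminsz : MinAt n (swapSeq z (i+k)) k :=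
      MinAt_swapSeq n z (i+k) k hminz (by omega) (by omega) (by omega) (by omega)
    have hpdz := (PDvec_eq_iff n z x).1 hzx
    -- transfer of PD tables to the suffix
    have htrans : ∀ q, 1 ≤ q → q ≤ n - k →
        fwdPD (fun j => z (j + k)) q = fwdPD (fun j => x (j + k)) q := by
      intro q hq1 hq2
      have hsz := fwdPD_suffix z k (q+k) hk1 (by omega)
        (fun j a b c => hminz j a (by omega) c)
      have hsx := fwdPD_suffix x k (q+k) hk1 (by omega)
        (fun j a b c => hmin j a (by omega) c)
      rw [Nat.add_sub_cancel] at hsz hsx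
      have heq := hpdz (q+k) (by omega) (by omega)
      have hlz := fwdPD_lt (fun j => z (j + k)) q hq1
      have hlx := fwdPD_lt (fun j => x (j + k)) q hq1
      rw [hsz, hsx] at heq
      split_ifs at heq <;> omega
    refine ⟨PDvec (n-k) (swapSeq (fun j => z (j + k)) i), ⟨hi1, hi2, (fun j => z (j + k)), ?_, ?_, rfl⟩, ?_⟩
    · intro a ha b hb heq
      simp only [Set.mem_Icc] at ha hb
      have := hz (Set.mem_Icc.mpr ⟨by omega, by omega⟩ : a + k ∈ Set.Icc 1 n)
        (Set.mem_Icc.mpr ⟨by omega, by omega⟩ : b + k ∈ Set.Icc 1 n) heq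
      omega
    · rw [PDvec_eq_iff]
      intro q hq1 hq2
      exact htrans q hq1 hq2
    · funext m
      by_cases hm : k ≤ m.1
      · simp only [PhiR, PDvec, dif_pos hm]
        have hcomp : ∀ q, 1 ≤ q → q ≤ n - k →
            swapSeq z (i+k) (q + k) = swapSeq (fun j => z (j + k)) i q + 0 := by
          intro q _ _
          rw [swapSeq_eq_swapIdx z, swapIdx_add, swapSeq_eq_swapIdx (fun j => z (j + k)) i]
          simp
        have hsw := fwdPD_suffix (swapSeq z (i+k)) k (m.1+1) hk1 (by omega)
          (fun j a b c => hminsz j a (by omega) c)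
        have hlam : fwdPD (fun q => swapSeq z (i+k) (q + k)) (m.1+1-k)
            = fwdPD (swapSeq (fun j => z (j + k)) i) (m.1+1-k) := by
          have := fwdPD_eq_of_shift_eqOn (fun q => swapSeq z (i+k) (q + k))
            (swapSeq (fun j => z (j + k)) i) 0 (n-k) (m.1+1-k) (by have := m.2; omega) hcomp
          simpa using this
        rw [hsw, hlam, show m.1 + 1 - k = m.1 - k + 1 by omega]
        rfl
      · simp only [PhiR, PDvec, dif_neg hm]
        have h1 : fwdPD (swapSeq z (i+k)) (m.1+1) = fwdPD z (m.1+1) :=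
          fwdPD_eq_of_eqOn (swapSeq z (i+k)) z (m.1+1)
            (fun j hj => swapSeq_eq_of_lt z (i+k) j (by omega))
        rw [h1, hpdz (m.1+1) (by omega) (by omega)]
  · rintro ⟨Q, ⟨_, _, w', hw', hw'x', rfl⟩, rfl⟩
    have hpdw' := (PDvec_eq_iff (n-k) w' (fun j => x (j + k))).1 hw'x'
    have hne1 : ((Finset.Icc 1 n).image x).Nonempty :=
      ⟨x 1, Finset.mem_image.mpr ⟨1, Finset.mem_Icc.mpr ⟨le_rfl, by omega⟩, rfl⟩⟩
    have hne2 : ((Finset.Icc 1 (n-k)).image w').Nonempty :=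
      ⟨w' 1, Finset.mem_image.mpr ⟨1, Finset.mem_Icc.mpr ⟨le_rfl, by omega⟩, rfl⟩⟩
    set A := ((Finset.Icc 1 n).image x).max' hne1 with hA
    set B := ((Finset.Icc 1 (n-k)).image w').min' hne2 with hB
    set M := A + 1 - B with hM
    set z : ℕ → ℤ := fun j => if j ≤ k then x j else w' (j - k) + M with hzdef
    have ha : ∀ q, 1 ≤ q → q ≤ n-k → ∀ p, 1 ≤ p → p ≤ n → x p < w' q + M := by
      intro q hq1 hq2 p hp1 hp2
      have h1 : x p ≤ A := Finset.le_max' _ _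
        (Finset.mem_image.mpr ⟨p, Finset.mem_Icc.mpr ⟨hp1, hp2⟩, rfl⟩)
      have h2 : B ≤ w' q := Finset.min'_le _ _
        (Finset.mem_image.mpr ⟨q, Finset.mem_Icc.mpr ⟨hq1, hq2⟩, rfl⟩)
      omega
    have hzpre : ∀ j, j ≤ k → z j = x j := by
      intro j hj
      simp only [hzdef, if_pos hj]
    have hzsuf : ∀ j, k < j → z j = w' (j - k) + M := by
      intro j hj
      simp only [hzdef, if_neg (by omega : ¬ j ≤ k)]
    have hsh : ∀ q, 1 ≤ q → q ≤ n - k → z (q + k) = w' q + M := by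
      intro q hq1 _
      rw [hzsuf (q+k) (by omega), Nat.add_sub_cancel]
    have hminz : MinAt n z k := by
      intro j hj1 hj2 hjk
      rw [hzpre k le_rfl]
      by_cases hjp : j ≤ k
      · rw [hzpre j hjp]
        exact hmin j hj1 hj2 hjk
      · rw [hzsuf j (by omega)]
        exact ha (j-k) (by omega) (by omega) k hk1 hk2
    have hzinj : IsSeq n z := by
      intro a ha' b hb' heq
      simp only [Set.mem_Icc] at ha' hb'
      by_cases hap : a ≤ k <;> by_cases hbp : b ≤ k
      · rw [hzpre a hap, hzpre b hbp] at heq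
        exact hx (Set.mem_Icc.mpr ⟨ha'.1, by omega⟩) (Set.mem_Icc.mpr ⟨hb'.1, by omega⟩) heq
      · rw [hzpre a hap, hzsuf b (by omega)] at heq
        exact absurd heq (ne_of_lt (ha (b-k) (by omega) (by omega) a ha'.1 (by omega)))
      · rw [hzsuf a (by omega), hzpre b hbp] at heq
        exact absurd heq.symm (ne_of_lt (ha (a-k) (by omega) (by omega) b hb'.1 (by omega)))
      · rw [hzsuf a (by omega), hzsuf b (by omega)] at heq
        have h1 : w' (a-k) = w' (b-k) := by omega
        have := hw' (Set.mem_Icc.mpr ⟨by omega, by omega⟩) (Set.mem_Icc.mpr ⟨by omega, by omega⟩) h1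
        omega
    have hzx : PDvec n z = PDvec n x := by
      rw [PDvec_eq_iff]
      intro p hp1 hp2
      by_cases hpp : p ≤ k
      · exact fwdPD_eq_of_eqOn z x p (fun j hj => hzpre j (by omega))
      · have hsz := fwdPD_suffix z k p hk1 (by omega)
          (fun j a b c => hminz j a (by omega) c)
        have hsx := fwdPD_suffix x k p hk1 (by omega)
          (fun j a b c => hmin j a (by omega) c)
        have hlam : fwdPD (fun q => z (q + k)) (p - k) = fwdPD w' (p - k) :=
          fwdPD_eq_of_shift_eqOn (fun q => z (q + k)) w' M (n-k) (p-k) (by omega)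
            (fun q hq1 hq2 => hsh q hq1 hq2)
        rw [hsz, hsx, hlam, hpdw' (p-k) (by omega) (by omega)]
    refine ⟨by omega, by omega, z, hzinj, hzx, ?_⟩
    have hminsz : MinAt n (swapSeq z (i+k)) k :=
      MinAt_swapSeq n z (i+k) k hminz (by omega) (by omega) (by omega) (by omega)
    funext m
    by_cases hm : k ≤ m.1
    · simp only [PhiR, PDvec, dif_pos hm]
      have hsw := fwdPD_suffix (swapSeq z (i+k)) k (m.1+1) hk1 (by omega)
        (fun j a b c => hminsz j a (by omega) c)
      have hcomp : ∀ q, 1 ≤ q → q ≤ n - k →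
          swapSeq z (i+k) (q + k) = swapSeq w' i q + M := by
        intro q hq1 hq2
        rw [swapSeq_eq_swapIdx z, swapIdx_add, swapSeq_eq_swapIdx w' i]
        have hmem := swapIdx_mem i q 1 (n-k) hi1 hi2 hq1 hq2
        exact hsh _ hmem.1 hmem.2
      have hlam : fwdPD (fun q => swapSeq z (i+k) (q + k)) (m.1+1-k)
          = fwdPD (swapSeq w' i) (m.1+1-k) :=
        fwdPD_eq_of_shift_eqOn _ _ M (n-k) (m.1+1-k) (by have := m.2; omega) hcomp
      rw [hsw, hlam, show m.1 + 1 - k = m.1 - k + 1 by omega]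
      rfl
    · simp only [PhiR, PDvec, dif_neg hm]
      have h1 : fwdPD (swapSeq z (i+k)) (m.1+1) = fwdPD z (m.1+1) :=
        fwdPD_eq_of_eqOn (swapSeq z (i+k)) z (m.1+1)
          (fun j hj => swapSeq_eq_of_lt z (i+k) j (by omega))
      rw [h1]
      exact (((PDvec_eq_iff n z x).1 hzx) (m.1+1) (by omega) (by omega)).symm

end Right
section Assemble

lemma sum_split (n k : ℕ) (g : ℕ → ℕ) (hk1 : 1 ≤ k) (hk2 : k ≤ n)
    (hg : ∀ i, ¬(1 ≤ i ∧ i + 1 ≤ n) → g i = 0) :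
    ∑ i ∈ Finset.Icc 1 (n-1), g i
      = (∑ i ∈ Finset.Icc 1 (k-2), g i) + g (k-1) + g k
        + ∑ i ∈ Finset.Icc (k+1) (n-1), g i := by
  rw [show Finset.Icc 1 (n-1) = Finset.Ioc 0 (n-1) by rw [← Finset.Icc_add_one_left_eq_Ioc, zero_add],
      show Finset.Icc 1 (k-2) = Finset.Ioc 0 (k-2) by rw [← Finset.Icc_add_one_left_eq_Ioc, zero_add],
      show Finset.Icc (k+1) (n-1) = Finset.Ioc k (n-1) by rw [← Finset.Icc_add_one_left_eq_Ioc]]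
  rw [← Finset.sum_Ioc_consecutive g (show (0:ℕ) ≤ k-2 by omega) (show k-2 ≤ n-1 by omega)]
  by_cases hkn : k + 1 ≤ n
  · rw [← Finset.sum_Ioc_consecutive g (show k-2 ≤ k by omega) (show k ≤ n-1 by omega)]
    by_cases hk2' : 2 ≤ k
    · have hio : Finset.Ioc (k-2) k = {k-1, k} := by
        ext a
        simp only [Finset.mem_Ioc, Finset.mem_insert, Finset.mem_singleton]
        omega
      rw [hio, Finset.sum_pair (by omega : k - 1 ≠ k)]
      omega
    · have hk1' : k = 1 := by omega
      subst hk1'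
      have hio : Finset.Ioc (1-2) 1 = {1} := by
        ext a
        simp only [Finset.mem_Ioc, Finset.mem_singleton]
        omega
      rw [hio, Finset.sum_singleton, hg 0 (by omega)]
      omega
  · have hkn' : k = n := by omega
    subst hkn'
    rw [show Finset.Ioc k (k-1) = ∅ by apply Finset.Ioc_eq_empty; omega, Finset.sum_empty,
        hg k (by omega)]
    by_cases hk2' : 2 ≤ k
    · have hio : Finset.Ioc (k-2) (k-1) = {k-1} := by
        ext a
        simp only [Finset.mem_Ioc, Finset.mem_singleton]
        omega
      rw [hio, Finset.sum_singleton]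
      omega
    · have hk1' : k = 1 := by omega
      subst hk1'
      rw [show Finset.Ioc (1-2) (1-1) = ∅ by apply Finset.Ioc_eq_empty; omega,
          Finset.sum_empty, hg 0 (by omega)]
      omega

theorem stmt12' (n k : ℕ) (x : ℕ → ℤ) (hx : IsSeq n x)
    (hk1 : 1 ≤ k) (hk2 : k ≤ n)
    (hmin : ∀ j, 1 ≤ j → j ≤ n → j ≠ k → x k < x j) :
    (NG n x).ncard =
      (NG (k - 1) x).ncard + (NG (n - k) (fun j => x (j + k))).ncard +
        (NGat n x (k - 1)).ncard + (NGat n x k).ncard ∧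
    ∑ i ∈ Finset.Icc 1 (k - 2), (NGat n x i).ncard = (NG (k - 1) x).ncard ∧
    ∑ i ∈ Finset.Icc (k + 1) (n - 1), (NGat n x i).ncard
      = (NG (n - k) (fun j => x (j + k))).ncard := by
  have hmin' : MinAt n x k := hmin
  have h2 : ∑ i ∈ Finset.Icc 1 (k - 2), (NGat n x i).ncard = (NG (k - 1) x).ncard := by
    have hc : ∀ i ∈ Finset.Icc 1 (k-2), (NGat n x i).ncard = (NGat (k-1) x i).ncard := by
      intro i hi
      rw [Finset.mem_Icc] at hi
      rw [L_img n k x hx hk1 hk2 hmin' i hi.1 (by omega),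
          Set.ncard_image_of_injective _ (PhiL_injective n k x (by omega))]
    rw [Finset.sum_congr rfl hc, NG_ncard_sum (k-1) x, show k - 1 - 1 = k - 2 by omega]
  have h3 : ∑ i ∈ Finset.Icc (k + 1) (n - 1), (NGat n x i).ncard
      = (NG (n - k) (fun j => x (j + k))).ncard := by
    have hmap : Finset.Icc (k+1) (n-1)
        = (Finset.Icc 1 (n - k - 1)).map ⟨fun i => i + k, add_left_injective k⟩ := by
      ext a
      simp only [Finset.mem_Icc, Finset.mem_map, Function.Embedding.coeFn_mk]
      constructor
      · intro h
        exact ⟨a - k, by omega, by omega⟩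
      · rintro ⟨b, hb, he⟩
        have hba : b + k = a := he
        omega
    rw [hmap, Finset.sum_map]
    simp only [Function.Embedding.coeFn_mk]
    have hc : ∀ i ∈ Finset.Icc 1 (n-k-1),
        (NGat n x (i + k)).ncard = (NGat (n-k) (fun j => x (j + k)) i).ncard := by
      intro i hi
      rw [Finset.mem_Icc] at hi
      rw [R_img n k x hx hk1 hk2 hmin' i hi.1 (by omega),
          Set.ncard_image_of_injOn ((PhiR_injOn n k x).mono (NGat_subset_V _ _ _))]
    rw [Finset.sum_congr rfl hc, NG_ncard_sum (n-k) (fun j => x (j + k))]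
  refine ⟨?_, h2, h3⟩
  rw [NG_ncard_sum n x,
      sum_split n k (fun i => (NGat n x i).ncard) hk1 hk2
        (fun i hi => by show (NGat n x i).ncard = 0; rw [NGat_out_empty n x i hi, Set.ncard_empty]),
      h2, h3]
  omega

end Assemble

theorem stmt12 (n k : ℕ) (x : ℕ → ℤ) (hx : IsSeq n x)
    (hk1 : 1 ≤ k) (hk2 : k ≤ n)
    (hmin : ∀ j, 1 ≤ j → j ≤ n → j ≠ k → x k < x j) :
    (NG n x).ncard =
      (NG (k - 1) x).ncard + (NG (n - k) (fun j => x (j + k))).ncard +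
        (NGat n x (k - 1)).ncard + (NGat n x k).ncard ∧
    ∑ i ∈ Finset.Icc 1 (k - 2), (NGat n x i).ncard = (NG (k - 1) x).ncard ∧
    ∑ i ∈ Finset.Icc (k + 1) (n - 1), (NGat n x i).ncard
      = (NG (n - k) (fun j => x (j + k))).ncard := by
  exact stmt12' n k x hx hk1 hk2 hmin
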